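/- arXiv:2111.01737 — 7 statements merged into one kernel-verified Lean document; each statement's English description precedes it below -/
import Mathlib

section
/- (Symmetry Lemma) Let 0 < ε < 1/100 and let G = (U ∪ W, E) be a finite bipartite graph with U, W nonempty. Suppose there are U' ⊆ U and W' ⊆ W with |U'| ≥ (1−ε)|U| and |W'| ≥ (1−ε)|W| such that: for every u ∈ U', max{|N(u) ∩ W|, |W ∖ N(u)|} ≥ (1−ε)|W|, and for every w ∈ W', max{|N(w) ∩ U|, |U ∖ N(w)|} ≥ (1−ε)|U|. Then |E| ≤ 2√ε · |U||W| or |E| ≥ (1 − 2√ε)|U||W|. -/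
open Finset

/-- Double counting: edge count between `A` and `B` summed from either side. -/
lemma stmt3_double_count {α β : Type*} (r : α → β → Prop)
    [∀ a, DecidablePred (r a)] [∀ b, DecidablePred fun a => r a b]
    (A : Finset α) (B : Finset β) :
    ∑ u ∈ A, (B.filter fun w => r u w).card = ∑ w ∈ B, (A.filter fun u => r u w).card := by
  simp_rw [Finset.card_filter]
  exact Finset.sum_comm

lemma stmt3_card_interedges {α β : Type*} (r : α → β → Prop)
    [∀ a, DecidablePred (r a)] (U : Finset α) (W : Finset β) :
    (Rel.interedges r U W).card = ∑ u ∈ U, (W.filter fun w => r u w).card := by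
  unfold Rel.interedges
  rw [Finset.card_filter, Finset.sum_product]
  exact Finset.sum_congr rfl fun u _ => (Finset.card_filter _ _).symm

set_option maxHeartbeats 1600000 in
/-- Symmetry Lemma.  The bipartite graph `G = (U ∪ W, E)` is modelled by a
relation `r` between two (disjoint) vertex types; `|E| = (Rel.interedges r U W).card`. -/
theorem stmt_3 {α β : Type*} (r : α → β → Prop)
    [∀ a, DecidablePred (r a)] [∀ b, DecidablePred fun a => r a b]
    (U : Finset α) (W : Finset β) (hU : U.Nonempty) (hW : W.Nonempty)
    (ε : ℝ) (hε0 : 0 < ε) (hε1 : ε < 1 / 100)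
    (U' : Finset α) (W' : Finset β) (hU'sub : U' ⊆ U) (hW'sub : W' ⊆ W)
    (hU'card : (1 - ε) * U.card ≤ U'.card) (hW'card : (1 - ε) * W.card ≤ W'.card)
    (hu : ∀ u ∈ U', (1 - ε) * W.card ≤
      max ((W.filter fun w => r u w).card : ℝ) ((W.filter fun w => ¬ r u w).card : ℝ))
    (hw : ∀ w ∈ W', (1 - ε) * U.card ≤
      max ((U.filter fun u => r u w).card : ℝ) ((U.filter fun u => ¬ r u w).card : ℝ)) :
    ((Rel.interedges r U W).card : ℝ) ≤ 2 * Real.sqrt ε * U.card * W.card ∨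
      (1 - 2 * Real.sqrt ε) * U.card * W.card ≤ ((Rel.interedges r U W).card : ℝ) := by
  classical
  by_contra hcon
  push_neg at hcon
  obtain ⟨h1, h2⟩ := hcon
  set s : ℝ := Real.sqrt ε with hs
  have hs0 : 0 < s := Real.sqrt_pos.2 hε0
  have hss : s * s = ε := Real.mul_self_sqrt hε0.le
  have hs10 : s < 1 / 10 := by
    have : s < Real.sqrt (1 / 100) := by
      exact Real.sqrt_lt_sqrt hε0.le hε1
    have h100 : Real.sqrt (1 / 100) = 1 / 10 := by
      rw [show (1 : ℝ) / 100 = (1 / 10) ^ 2 by norm_num, Real.sqrt_sq (by norm_num)]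
    linarith [h100 ▸ this]
  have hεs : 2 * ε ≤ s := by nlinarith
  have hUpos : (0 : ℝ) < U.card := by exact_mod_cast card_pos.2 hU
  have hWpos : (0 : ℝ) < W.card := by exact_mod_cast card_pos.2 hW
  -- degree functions
  set d : α → ℕ := fun u => (W.filter fun w => r u w).card with hd
  set nd : α → ℕ := fun u => (W.filter fun w => ¬ r u w).card with hnd
  set d' : β → ℕ := fun w => (U.filter fun u => r u w).card with hd'
  set nd' : β → ℕ := fun w => (U.filter fun u => ¬ r u w).card with hnd'
  have hdnd : ∀ u, (d u : ℝ) + nd u = W.card := fun u => by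
    exact_mod_cast congrArg Nat.cast (Finset.card_filter_add_card_filter_not (s := W)
      (p := fun w => r u w))
  have hdnd' : ∀ w, (d' w : ℝ) + nd' w = U.card := fun w => by
    exact_mod_cast congrArg Nat.cast (Finset.card_filter_add_card_filter_not (s := U)
      (p := fun u => r u w))
  have hdW : ∀ u, (d u : ℝ) ≤ W.card := fun u => by
    have := hdnd u; have : (0:ℝ) ≤ nd u := Nat.cast_nonneg _; linarith [hdnd u]
  have hd'U : ∀ w, (d' w : ℝ) ≤ U.card := fun w => by
    have : (0:ℝ) ≤ nd' w := Nat.cast_nonneg _; linarith [hdnd' w]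
  -- high / low vertex sets
  set A : Finset α := U'.filter (fun u => W.card ≤ 2 * d u) with hA
  set B' : Finset β := W'.filter (fun w => 2 * d' w < U.card) with hB'
  have hAsub : A ⊆ U' := filter_subset _ _
  have hB'sub : B' ⊆ W' := filter_subset _ _
  -- degree dichotomy facts
  have hAhigh : ∀ u ∈ A, (1 - ε) * W.card ≤ (d u : ℝ) := by
    intro u huA
    obtain ⟨huU', hco⟩ := mem_filter.1 huA
    have hco' : (W.card : ℝ) ≤ 2 * d u := by exact_mod_cast hco
    have hndle : (nd u : ℝ) < (1 - ε) * W.card := by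
      have := hdnd u; nlinarith
    rcases le_max_iff.1 (hu u huU') with h | h
    · exact h
    · linarith
  have hU'low : ∀ u ∈ U', u ∉ A → (d u : ℝ) ≤ ε * W.card := by
    intro u huU' huA
    have hco : ¬ (W.card ≤ 2 * d u) := fun h => huA (mem_filter.2 ⟨huU', h⟩)
    have hco' : 2 * (d u : ℝ) < W.card := by
      push_neg at hco; exact_mod_cast Nat.cast_lt.2 hco
    have hdlt : (d u : ℝ) < (1 - ε) * W.card := by nlinarith
    rcases le_max_iff.1 (hu u huU') with h | h
    · linarith
    · have := hdnd u; linarith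
  have hB'low : ∀ w ∈ B', (d' w : ℝ) ≤ ε * U.card := by
    intro w hwB
    obtain ⟨hwW', hco⟩ := mem_filter.1 hwB
    have hco' : 2 * (d' w : ℝ) < U.card := by exact_mod_cast hco
    have hdlt : (d' w : ℝ) < (1 - ε) * U.card := by nlinarith
    rcases le_max_iff.1 (hw w hwW') with h | h
    · linarith
    · have := hdnd' w; linarith
  have hW'high : ∀ w ∈ W', w ∉ B' → (1 - ε) * U.card ≤ (d' w : ℝ) := by
    intro w hwW' hwB
    have hco : ¬ (2 * d' w < U.card) := fun h => hwB (mem_filter.2 ⟨hwW', h⟩)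
    have hco' : (U.card : ℝ) ≤ 2 * d' w := by
      push_neg at hco; exact_mod_cast Nat.cast_le.2 hco
    have hndlt : (nd' w : ℝ) < (1 - ε) * U.card := by
      have := hdnd' w; nlinarith
    rcases le_max_iff.1 (hw w hwW') with h | h
    · exact h
    · linarith
  -- edge count from both sides
  set E : ℕ := (Rel.interedges r U W).card with hE
  have hE1 : (E : ℝ) = ∑ u ∈ U, (d u : ℝ) := by
    rw [hE, stmt3_card_interedges]; push_cast; rfl
  have hE2 : (E : ℝ) = ∑ w ∈ W, (d' w : ℝ) := by
    rw [hE, stmt3_card_interedges, stmt3_double_count]; push_cast; rfl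
  -- cardinality of complements
  have hUc : ((U \ U').card : ℝ) ≤ ε * U.card := by
    rw [card_sdiff_of_subset hU'sub]
    have h1 : (U'.card : ℝ) ≤ U.card := by exact_mod_cast card_le_card hU'sub
    have : ((U.card - U'.card : ℕ) : ℝ) = (U.card : ℝ) - U'.card := by
      rw [Nat.cast_sub (card_le_card hU'sub)]
    rw [this]; linarith
  have hWc : ((W \ W').card : ℝ) ≤ ε * W.card := by
    rw [card_sdiff_of_subset hW'sub]
    have : ((W.card - W'.card : ℕ) : ℝ) = (W.card : ℝ) - W'.card := by
      rw [Nat.cast_sub (card_le_card hW'sub)]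
    rw [this]; linarith
  -- Step A: |A| ≥ s |U|
  have hAcard : s * U.card ≤ A.card := by
    have hsplit : ∑ u ∈ U, (d u : ℝ) = ∑ u ∈ U \ U', (d u : ℝ) + ∑ u ∈ U', (d u : ℝ) :=
      (Finset.sum_sdiff hU'sub).symm
    have hb1 : ∑ u ∈ U \ U', (d u : ℝ) ≤ ε * U.card * W.card := by
      calc ∑ u ∈ U \ U', (d u : ℝ) ≤ ∑ _u ∈ U \ U', (W.card : ℝ) :=
            Finset.sum_le_sum fun u _ => hdW u
        _ = (U \ U').card * W.card := by rw [Finset.sum_const, nsmul_eq_mul]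
        _ ≤ ε * U.card * W.card := by nlinarith
    have hsplit2 : ∑ u ∈ U', (d u : ℝ) = ∑ u ∈ U' \ A, (d u : ℝ) + ∑ u ∈ A, (d u : ℝ) :=
      (Finset.sum_sdiff hAsub).symm
    have hb2 : ∑ u ∈ U' \ A, (d u : ℝ) ≤ ε * W.card * U.card := by
      calc ∑ u ∈ U' \ A, (d u : ℝ) ≤ ∑ _u ∈ U' \ A, ε * (W.card : ℝ) :=
            Finset.sum_le_sum fun u hu' =>
              hU'low u (mem_sdiff.1 hu').1 (mem_sdiff.1 hu').2
        _ = (U' \ A).card * (ε * W.card) := by rw [Finset.sum_const, nsmul_eq_mul]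
        _ ≤ U.card * (ε * W.card) := by
            have h1 : ((U' \ A).card : ℝ) ≤ U.card := by
              exact_mod_cast card_le_card ((sdiff_subset).trans hU'sub)
            nlinarith [mul_nonneg hε0.le hWpos.le]
        _ = ε * W.card * U.card := by ring
    have hb3 : ∑ u ∈ A, (d u : ℝ) ≤ A.card * W.card := by
      calc ∑ u ∈ A, (d u : ℝ) ≤ ∑ _u ∈ A, (W.card : ℝ) :=
            Finset.sum_le_sum fun u _ => hdW u
        _ = A.card * W.card := by rw [Finset.sum_const, nsmul_eq_mul]
    have hEb : (E : ℝ) ≤ A.card * W.card + 2 * ε * U.card * W.card := by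
      rw [hE1, hsplit, hsplit2]; linarith
    -- 2 s |U||W| < E ≤ |A||W| + 2ε|U||W|
    have : (2 * s - 2 * ε) * U.card * W.card < A.card * W.card := by nlinarith
    have hA' : (2 * s - 2 * ε) * U.card < A.card := by
      classical
  by_contra hcon2
      push_neg at hcon2
      nlinarith
    nlinarith
  -- Step B: |B'| ≥ s |W|
  have hB'card : s * W.card ≤ B'.card := by
    have hnE : (U.card : ℝ) * W.card - E = ∑ w ∈ W, (nd' w : ℝ) := by
      rw [hE2]
      have : ∑ w ∈ W, ((d' w : ℝ) + nd' w) = ∑ w ∈ W, (U.card : ℝ) := by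
        exact Finset.sum_congr rfl fun w _ => hdnd' w
      rw [Finset.sum_add_distrib] at this
      rw [Finset.sum_const, nsmul_eq_mul] at this
      linarith
    have hsplit : ∑ w ∈ W, (nd' w : ℝ) = ∑ w ∈ W \ W', (nd' w : ℝ) + ∑ w ∈ W', (nd' w : ℝ) :=
      (Finset.sum_sdiff hW'sub).symm
    have hndU : ∀ w, (nd' w : ℝ) ≤ U.card := fun w => by
      have : (0:ℝ) ≤ d' w := Nat.cast_nonneg _; linarith [hdnd' w]
    have hb1 : ∑ w ∈ W \ W', (nd' w : ℝ) ≤ ε * W.card * U.card := by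
      calc ∑ w ∈ W \ W', (nd' w : ℝ) ≤ ∑ _w ∈ W \ W', (U.card : ℝ) :=
            Finset.sum_le_sum fun w _ => hndU w
        _ = (W \ W').card * U.card := by rw [Finset.sum_const, nsmul_eq_mul]
        _ ≤ ε * W.card * U.card := by nlinarith
    have hsplit2 : ∑ w ∈ W', (nd' w : ℝ) = ∑ w ∈ W' \ B', (nd' w : ℝ) + ∑ w ∈ B', (nd' w : ℝ) :=
      (Finset.sum_sdiff hB'sub).symm
    have hb2 : ∑ w ∈ W' \ B', (nd' w : ℝ) ≤ ε * U.card * W.card := by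
      calc ∑ w ∈ W' \ B', (nd' w : ℝ) ≤ ∑ _w ∈ W' \ B', ε * (U.card : ℝ) := by
            refine Finset.sum_le_sum fun w hw' => ?_
            have := hW'high w (mem_sdiff.1 hw').1 (mem_sdiff.1 hw').2
            linarith [hdnd' w]
        _ = (W' \ B').card * (ε * U.card) := by rw [Finset.sum_const, nsmul_eq_mul]
        _ ≤ W.card * (ε * U.card) := by
            have h1 : ((W' \ B').card : ℝ) ≤ W.card := by
              exact_mod_cast card_le_card ((sdiff_subset).trans hW'sub)
            nlinarith [mul_nonneg hε0.le hUpos.le]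
        _ = ε * U.card * W.card := by ring
    have hb3 : ∑ w ∈ B', (nd' w : ℝ) ≤ B'.card * U.card := by
      calc ∑ w ∈ B', (nd' w : ℝ) ≤ ∑ _w ∈ B', (U.card : ℝ) :=
            Finset.sum_le_sum fun w _ => hndU w
        _ = B'.card * U.card := by rw [Finset.sum_const, nsmul_eq_mul]
    have hnEb : (U.card : ℝ) * W.card - E ≤ B'.card * U.card + 2 * ε * U.card * W.card := by
      rw [hnE, hsplit, hsplit2]; linarith
    have : (2 * s - 2 * ε) * U.card * W.card < B'.card * U.card := by nlinarith
    have hB'2 : (2 * s - 2 * ε) * W.card < B'.card := by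
      classical
  by_contra hcon2
      push_neg at hcon2
      nlinarith
    nlinarith
  -- Step C: double count pairs in A × B'
  have hApos : (0 : ℝ) < A.card := lt_of_lt_of_le (by positivity) hAcard
  have hB'pos : (0 : ℝ) < B'.card := lt_of_lt_of_le (by positivity) hB'card
  have hpairs : (A.card : ℝ) * B'.card ≤ ε * U.card * B'.card + ε * W.card * A.card := by
    have hdc : ∑ u ∈ A, ((B'.filter fun w => r u w).card : ℝ)
        = ∑ w ∈ B', ((A.filter fun u => r u w).card : ℝ) := by
      exact_mod_cast congrArg Nat.cast (stmt3_double_count r A B')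
    have hsplit : ∀ u, ((B'.filter fun w => r u w).card : ℝ)
        + ((B'.filter fun w => ¬ r u w).card : ℝ) = B'.card := fun u => by
      exact_mod_cast congrArg Nat.cast (Finset.card_filter_add_card_filter_not
        (s := B') (p := fun w => r u w))
    have h1' : ∑ w ∈ B', ((A.filter fun u => r u w).card : ℝ) ≤ ε * U.card * B'.card := by
      calc ∑ w ∈ B', ((A.filter fun u => r u w).card : ℝ)
          ≤ ∑ w ∈ B', ε * (U.card : ℝ) := by
            refine Finset.sum_le_sum fun w hwB => ?_
            have hsub : (A.filter fun u => r u w) ⊆ (U.filter fun u => r u w) :=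
              filter_subset_filter _ (hAsub.trans hU'sub)
            have := hB'low w hwB
            have hc : ((A.filter fun u => r u w).card : ℝ) ≤ d' w := by
              exact_mod_cast card_le_card hsub
            linarith
        _ = B'.card * (ε * U.card) := by rw [Finset.sum_const, nsmul_eq_mul]
        _ = ε * U.card * B'.card := by ring
    have h2' : ∑ u ∈ A, ((B'.filter fun w => ¬ r u w).card : ℝ) ≤ ε * W.card * A.card := by
      calc ∑ u ∈ A, ((B'.filter fun w => ¬ r u w).card : ℝ)
          ≤ ∑ u ∈ A, ε * (W.card : ℝ) := by
            refine Finset.sum_le_sum fun u huA => ?_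
            have hsub : (B'.filter fun w => ¬ r u w) ⊆ (W.filter fun w => ¬ r u w) :=
              filter_subset_filter _ (hB'sub.trans hW'sub)
            have hc : ((B'.filter fun w => ¬ r u w).card : ℝ) ≤ nd u := by
              exact_mod_cast card_le_card hsub
            have := hAhigh u huA
            have := hdnd u
            linarith
        _ = A.card * (ε * W.card) := by rw [Finset.sum_const, nsmul_eq_mul]
        _ = ε * W.card * A.card := by ring
    calc (A.card : ℝ) * B'.card = ∑ _u ∈ A, (B'.card : ℝ) := by
          rw [Finset.sum_const, nsmul_eq_mul]
      _ = ∑ u ∈ A, (((B'.filter fun w => r u w).card : ℝ)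
            + ((B'.filter fun w => ¬ r u w).card : ℝ)) :=
          (Finset.sum_congr rfl fun u _ => (hsplit u).symm)
      _ = ∑ u ∈ A, ((B'.filter fun w => r u w).card : ℝ)
            + ∑ u ∈ A, ((B'.filter fun w => ¬ r u w).card : ℝ) := Finset.sum_add_distrib
      _ ≤ ε * U.card * B'.card + ε * W.card * A.card := by
          rw [hdc]; exact add_le_add h1' h2'
  -- final contradiction
  have hεU : ε * (U.card : ℝ) ≤ s * A.card := by
    calc ε * (U.card : ℝ) = s * (s * U.card) := by rw [← hss]; ring
      _ ≤ s * A.card := by nlinarith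
  have hεW : ε * (W.card : ℝ) ≤ s * B'.card := by
    calc ε * (W.card : ℝ) = s * (s * W.card) := by rw [← hss]; ring
      _ ≤ s * B'.card := by nlinarith
  have : (A.card : ℝ) * B'.card ≤ 2 * s * (A.card * B'.card) := by nlinarith
  have hP : (0:ℝ) < (A.card : ℝ) * B'.card := mul_pos hApos hB'pos
  nlinarith [mul_pos (show (0:ℝ) < 1 - 2 * s by linarith) hP]
end

section
/- Let 0 < ε < 1/100, let G = (V, E) be a finite graph, and let U, W ⊆ V be disjoint nonempty subsets that are both ε-good. Then the number of edges of G between U and W is at most 2√ε · |U||W| or at least (1 − 2√ε)|U||W|. -/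
open Finset

private lemma dc_aux {V : Type*} [DecidableEq V] (G : SimpleGraph V) [DecidableRel G.Adj]
    (A B : Finset V) :
    ∑ a ∈ A, ((B.filter fun b => G.Adj a b).card) =
      ∑ b ∈ B, ((A.filter fun a => G.Adj b a).card) := by
  simp_rw [Finset.card_filter]
  rw [Finset.sum_comm]
  simp [G.adj_comm]

private lemma card_inter_aux {V : Type*} [DecidableEq V] (G : SimpleGraph V) [DecidableRel G.Adj]
    (A B : Finset V) :
    (G.interedges A B).card = ∑ a ∈ A, ((B.filter fun b => G.Adj a b).card) := by
  rw [SimpleGraph.interedges, Rel.interedges, Finset.card_filter, Finset.sum_product]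
  simp_rw [Finset.card_filter]

/-- `X` is `ε`-good in the graph `G`: every vertex is adjacent to at most an `ε`-fraction
or at least a `(1-ε)`-fraction of `X`. -/
def EGood {V : Type*} [DecidableEq V] (G : SimpleGraph V) [DecidableRel G.Adj]
    (ε : ℝ) (X : Finset V) : Prop :=
  ∀ v : V, ((X.filter fun u => G.Adj v u).card : ℝ) ≤ ε * X.card ∨
    (1 - ε) * X.card ≤ ((X.filter fun u => G.Adj v u).card : ℝ)

set_option maxHeartbeats 1000000 in
/-- a pair of `ε`-good sets is homogeneous. -/
theorem stmt_4 {V : Type*} [Fintype V] [DecidableEq V]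
    (G : SimpleGraph V) [DecidableRel G.Adj]
    (ε : ℝ) (hε0 : 0 < ε) (hε1 : ε < 1 / 100)
    (U W : Finset V) (hUW : Disjoint U W) (hU : U.Nonempty) (hW : W.Nonempty)
    (hUgood : EGood G ε U) (hWgood : EGood G ε W) :
    ((G.interedges U W).card : ℝ) ≤ 2 * Real.sqrt ε * U.card * W.card ∨
      (1 - 2 * Real.sqrt ε) * U.card * W.card ≤ ((G.interedges U W).card : ℝ) := by
  classical
  obtain ⟨s, hs_def⟩ : ∃ s, s = Real.sqrt ε := ⟨_, rfl⟩
  rw [← hs_def]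
  have hs0 : 0 < s := hs_def ▸ Real.sqrt_pos.2 hε0
  have hs2 : s * s = ε := hs_def ▸ Real.mul_self_sqrt hε0.le
  have hs10 : s < 1 / 10 := by nlinarith
  have hUpos : (0 : ℝ) < U.card := by exact_mod_cast hU.card_pos
  have hWpos : (0 : ℝ) < W.card := by exact_mod_cast hW.card_pos
  obtain ⟨dW, hdW⟩ : ∃ f : V → ℕ, ∀ v, f v = (W.filter fun b => G.Adj v b).card := ⟨_, fun _ => rfl⟩
  obtain ⟨dU, hdU⟩ : ∃ f : V → ℕ, ∀ v, f v = (U.filter fun b => G.Adj v b).card := ⟨_, fun _ => rfl⟩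
  have hdWle : ∀ v, (dW v : ℝ) ≤ W.card := fun v => by
    rw [hdW]; exact_mod_cast Finset.card_filter_le _ _
  obtain ⟨p, hp⟩ : ∃ p : V → Prop, ∀ v, p v ↔ (1 - ε) * (W.card : ℝ) ≤ (dW v : ℝ) :=
    ⟨_, fun _ => Iff.rfl⟩
  obtain ⟨q, hq⟩ : ∃ q : V → Prop, ∀ v, q v ↔ (1 - ε) * (U.card : ℝ) ≤ (dU v : ℝ) :=
    ⟨_, fun _ => Iff.rfl⟩
  -- high/low degree parts of U
  obtain ⟨U₁, hU₁⟩ : ∃ A, A = U.filter p := ⟨_, rfl⟩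
  obtain ⟨U₀, hU₀⟩ : ∃ A, A = U.filter (fun u => ¬ p u) := ⟨_, rfl⟩
  have hU₁sub : U₁ ⊆ U := hU₁ ▸ Finset.filter_subset _ _
  have hU₀sub : U₀ ⊆ U := hU₀ ▸ Finset.filter_subset _ _
  have hU₁card : (U₁.card : ℝ) ≤ U.card := by exact_mod_cast Finset.card_le_card hU₁sub
  have hhigh : ∀ u ∈ U₁, (1 - ε) * (W.card : ℝ) ≤ (dW u : ℝ) := fun u hu => by
    rw [hU₁] at hu; exact (hp u).1 (Finset.mem_filter.1 hu).2
  have hlow : ∀ u ∈ U₀, (dW u : ℝ) ≤ ε * W.card := by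
    intro u hu
    rw [hU₀] at hu
    obtain ⟨huU, hup⟩ := Finset.mem_filter.1 hu
    rcases hWgood u with h | h
    · rw [hdW]; exact h
    · exact absurd ((hp u).2 (by rw [hdW]; exact h)) hup
  have hsplit : ∑ u ∈ U₁, (dW u : ℝ) + ∑ u ∈ U₀, (dW u : ℝ) = ∑ u ∈ U, (dW u : ℝ) := by
    rw [hU₁, hU₀]; exact Finset.sum_filter_add_sum_filter_not U _ _
  have hE : ((G.interedges U W).card : ℝ) = ∑ u ∈ U, (dW u : ℝ) := by
    rw [card_inter_aux G U W]
    push_cast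
    exact Finset.sum_congr rfl fun u _ => by rw [hdW]
  have sum_const_bound : ∀ (A : Finset V) (c : ℝ) (f : V → ℝ), (∀ a ∈ A, f a ≤ c) →
      ∑ a ∈ A, f a ≤ (A.card : ℝ) * c := by
    intro A c f hf
    calc ∑ a ∈ A, f a ≤ ∑ _a ∈ A, c := Finset.sum_le_sum hf
      _ = A.card * c := by rw [Finset.sum_const, nsmul_eq_mul]
  have sum_const_lb : ∀ (A : Finset V) (c : ℝ) (f : V → ℝ), (∀ a ∈ A, c ≤ f a) →
      (A.card : ℝ) * c ≤ ∑ a ∈ A, f a := by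
    intro A c f hf
    calc (A.card : ℝ) * c = ∑ _a ∈ A, c := by rw [Finset.sum_const, nsmul_eq_mul]
      _ ≤ ∑ a ∈ A, f a := Finset.sum_le_sum hf
  have b1u : ∑ u ∈ U₁, (dW u : ℝ) ≤ (U₁.card : ℝ) * W.card :=
    sum_const_bound U₁ _ _ fun u _ => hdWle u
  have b1l : (U₁.card : ℝ) * ((1 - ε) * W.card) ≤ ∑ u ∈ U₁, (dW u : ℝ) :=
    sum_const_lb U₁ _ _ fun u hu => hhigh u hu
  have b0u : ∑ u ∈ U₀, (dW u : ℝ) ≤ (U₀.card : ℝ) * (ε * W.card) :=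
    sum_const_bound U₀ _ _ fun u hu => hlow u hu
  have b0l : (0:ℝ) ≤ ∑ u ∈ U₀, (dW u : ℝ) := Finset.sum_nonneg fun u _ => by positivity
  have hU₀card : (U₀.card : ℝ) ≤ U.card := by exact_mod_cast Finset.card_le_card hU₀sub
  by_cases h1 : (U₁.card : ℝ) ≤ s * U.card
  · -- few high-degree vertices: few edges
    left
    have hεs : ε ≤ s := by nlinarith
    have t1 : (U₁.card : ℝ) * W.card ≤ s * U.card * W.card := by nlinarith
    have t2 : (U₀.card : ℝ) * (ε * W.card) ≤ s * U.card * W.card := by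
      calc (U₀.card : ℝ) * (ε * W.card) ≤ (U.card : ℝ) * (ε * W.card) :=
            mul_le_mul_of_nonneg_right hU₀card (by positivity)
        _ ≤ (U.card : ℝ) * (s * W.card) :=
            mul_le_mul_of_nonneg_left (mul_le_mul_of_nonneg_right hεs hWpos.le) hUpos.le
        _ = s * U.card * W.card := by ring
    rw [hE, ← hsplit]
    linarith
  · push_neg at h1
    by_cases h2 : (1 - s) * U.card ≤ (U₁.card : ℝ)
    · -- many high-degree vertices: many edges
      right
      have hεs : ε ≤ s := by nlinarith
      have t : (1 - s) * U.card * ((1 - ε) * W.card) ≤ (U₁.card : ℝ) * ((1 - ε) * W.card) := by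
        apply mul_le_mul_of_nonneg_right h2
        nlinarith
      rw [hE, ← hsplit]
      nlinarith [mul_pos hUpos hWpos]
    · -- intermediate case: contradiction
      exfalso
      push_neg at h2
      obtain ⟨W₁, hW₁⟩ : ∃ A, A = W.filter q := ⟨_, rfl⟩
      obtain ⟨W₀, hW₀⟩ : ∃ A, A = W.filter (fun w => ¬ q w) := ⟨_, rfl⟩
      have hW₁card : (W₁.card : ℝ) ≤ W.card := by
        exact_mod_cast Finset.card_le_card (hW₁ ▸ Finset.filter_subset _ _)
      have hW₀card : (W₀.card : ℝ) ≤ W.card := by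
        exact_mod_cast Finset.card_le_card (hW₀ ▸ Finset.filter_subset _ _)
      have hWhigh : ∀ w ∈ W₁, (1 - ε) * (U.card : ℝ) ≤ (dU w : ℝ) := fun w hw => by
        rw [hW₁] at hw; exact (hq w).1 (Finset.mem_filter.1 hw).2
      have hWlow : ∀ w ∈ W₀, (dU w : ℝ) ≤ ε * U.card := by
        intro w hw
        rw [hW₀] at hw
        obtain ⟨hwW, hwq⟩ := Finset.mem_filter.1 hw
        rcases hUgood w with h | h
        · rw [hdU]; exact h
        · exact absurd ((hq w).2 (by rw [hdU]; exact h)) hwq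
      have hU₁pos : (0:ℝ) < U₁.card := lt_trans (by positivity) h1
      -- double counting of edges between U₁ and W
      obtain ⟨f₁, hf₁⟩ : ∃ f : V → ℕ, ∀ w, f w = (U₁.filter fun a => G.Adj w a).card :=
        ⟨_, fun _ => rfl⟩
      obtain ⟨f₀, hf₀⟩ : ∃ f : V → ℕ, ∀ w, f w = (U₀.filter fun a => G.Adj w a).card :=
        ⟨_, fun _ => rfl⟩
      have hdc1 : ∑ u ∈ U₁, (dW u : ℝ) = ∑ w ∈ W, (f₁ w : ℝ) := by
        have := dc_aux G U₁ W
        have h' : ∑ u ∈ U₁, dW u = ∑ w ∈ W, f₁ w := by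
          rw [show (fun v => dW v) = fun v => (W.filter fun b => G.Adj v b).card from funext hdW] at *
          simpa [hdW, hf₁] using this
        exact_mod_cast congrArg Nat.cast h'
      have hdc0 : ∑ u ∈ U₀, (dW u : ℝ) = ∑ w ∈ W, (f₀ w : ℝ) := by
        have := dc_aux G U₀ W
        have h' : ∑ u ∈ U₀, dW u = ∑ w ∈ W, f₀ w := by
          simpa [hdW, hf₀] using this
        exact_mod_cast congrArg Nat.cast h'
      have hWsplit1 : ∑ w ∈ W₁, (f₁ w : ℝ) + ∑ w ∈ W₀, (f₁ w : ℝ) = ∑ w ∈ W, (f₁ w : ℝ) := by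
        rw [hW₁, hW₀]; exact Finset.sum_filter_add_sum_filter_not W _ _
      have hWsplit0 : ∑ w ∈ W₁, (f₀ w : ℝ) + ∑ w ∈ W₀, (f₀ w : ℝ) = ∑ w ∈ W, (f₀ w : ℝ) := by
        rw [hW₁, hW₀]; exact Finset.sum_filter_add_sum_filter_not W _ _
      have hf₁le : ∀ w, (f₁ w : ℝ) ≤ U₁.card := fun w => by
        rw [hf₁]; exact_mod_cast Finset.card_filter_le _ _
      have hf₁dU : ∀ w, (f₁ w : ℝ) ≤ dU w := fun w => by
        rw [hf₁, hdU]
        exact_mod_cast Finset.card_le_card (Finset.filter_subset_filter _ hU₁sub)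
      have hf₀dU : ∀ w, (f₀ w : ℝ) ≤ dU w := fun w => by
        rw [hf₀, hdU]
        exact_mod_cast Finset.card_le_card (Finset.filter_subset_filter _ hU₀sub)
      -- lower bound for W₁.card
      have lb : (1 - ε - s) * W.card < (W₁.card : ℝ) := by
        have p1 : ∑ w ∈ W₁, (f₁ w : ℝ) ≤ (W₁.card : ℝ) * U₁.card :=
          sum_const_bound W₁ _ _ fun w _ => hf₁le w
        have p0 : ∑ w ∈ W₀, (f₁ w : ℝ) ≤ (W₀.card : ℝ) * (ε * U.card) :=
          sum_const_bound W₀ _ _ fun w hw => (hf₁dU w).trans (hWlow w hw)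
        have key : (U₁.card : ℝ) * ((1 - ε) * W.card)
            ≤ (W₁.card : ℝ) * U₁.card + ε * U.card * W.card := by
          have := b1l
          rw [hdc1, ← hWsplit1] at this
          nlinarith [mul_pos hε0 hUpos]
        have hεU : ε * U.card < s * U₁.card := by nlinarith
        nlinarith [mul_pos hU₁pos hWpos]
      -- upper bound for W₁.card
      have ub : (W₁.card : ℝ) * ((s - ε) * U.card) ≤ ε * U.card * W.card := by
        have q1 : ∑ w ∈ W, (f₀ w : ℝ) ≤ ε * W.card * U.card := by
          rw [← hdc0]
          nlinarith
        have step : ∀ w ∈ W₁, (1 - ε) * (U.card : ℝ) - U₁.card ≤ (f₀ w : ℝ) := by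
          intro w hw
          have hsub : U.filter (fun a => G.Adj w a) ⊆
              (U₁.filter fun a => G.Adj w a) ∪ (U₀.filter fun a => G.Adj w a) := by
            intro x hx
            have hx' := Finset.mem_filter.1 hx
            by_cases hxx : p x
            · exact Finset.mem_union_left _
                (Finset.mem_filter.2 ⟨hU₁ ▸ Finset.mem_filter.2 ⟨hx'.1, hxx⟩, hx'.2⟩)
            · exact Finset.mem_union_right _
                (Finset.mem_filter.2 ⟨hU₀ ▸ Finset.mem_filter.2 ⟨hx'.1, hxx⟩, hx'.2⟩)
          have hn : dU w ≤ f₁ w + f₀ w := by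
            rw [hdU, hf₁, hf₀]
            exact (Finset.card_le_card hsub).trans (Finset.card_union_le _ _)
          have h4 : (dU w : ℝ) ≤ (f₁ w : ℝ) + (f₀ w : ℝ) := by exact_mod_cast hn
          have h6 := hWhigh w hw
          have h5 := hf₁le w
          linarith
        have q2 : (W₁.card : ℝ) * ((1 - ε) * U.card - U₁.card) ≤ ∑ w ∈ W, (f₀ w : ℝ) := by
          have r1 : (W₁.card : ℝ) * ((1 - ε) * U.card - U₁.card) ≤ ∑ w ∈ W₁, (f₀ w : ℝ) :=
            sum_const_lb W₁ _ _ step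
          have r0 : (0:ℝ) ≤ ∑ w ∈ W₀, (f₀ w : ℝ) := Finset.sum_nonneg fun w _ => by positivity
          linarith [hWsplit0]
        have q3 : (W₁.card : ℝ) * ((s - ε) * U.card) ≤ (W₁.card : ℝ) * ((1 - ε) * U.card - U₁.card) := by
          have hWcnn : (0:ℝ) ≤ W₁.card := by positivity
          nlinarith
        linarith
      -- final contradiction
      have hsε : ε < s := by nlinarith [mul_lt_mul_of_pos_left hs10 hs0]
      have ub' : (W₁.card : ℝ) * (s - ε) ≤ ε * W.card := by
        nlinarith [hUpos, ub]
      have hpoly : ε < (1 - ε - s) * (s - ε) := by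
        nlinarith [mul_lt_mul_of_pos_left hs10 hs0]
      have lb' : (1 - ε - s) * W.card * (s - ε) < (W₁.card : ℝ) * (s - ε) :=
        mul_lt_mul_of_pos_right lb (by linarith)
      nlinarith [mul_lt_mul_of_pos_right hpoly hWpos]
end

section
/- Let G = (U ∪ W, E) be a bipartite graph, b ∈ U, A ⊆ W, and set A₁ = N(b) ∩ A and A₀ = A ∖ N(b). Let d ≥ 0 and suppose A₁ contains the leaves of some d-tree of G with nodes in U, and A₀ contains the leaves of some d-tree of G with nodes in U. Then A contains the leaves of a (d+1)-tree of G with nodes in U. (In particular, if A₁ and A₀ are both nonempty then the rank of A is at least 1 + min(rank(A₁), rank(A₀)).) -/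
/-- A `d`-tree of the bipartite graph given by the relation `r : α → β → Prop`
(vertices of the `U`-side have type `α`, so nodes automatically lie in `U`), with leaves
in `A ⊆ β`.  Binary strings are modelled as `List Bool`; `σ ◁ ρ` is "proper prefix",
which for `σ` of length `< d` and `ρ` of length `d` is just `σ <+: ρ`; `σ⌢1` is
`σ ++ [true]`.  The nodes are `b σ` for `σ ∈ 2^{<d}` and the leaves are `a ρ` for
`ρ ∈ 2^d` (values of `b`, `a` on other strings are irrelevant). -/
def IsTree {α β : Type*} (r : α → β → Prop) (A : Set β) (d : ℕ)
    (b : List Bool → α) (a : List Bool → β) : Prop :=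
  (∀ ρ : List Bool, ρ.length = d → a ρ ∈ A) ∧
    ∀ σ ρ : List Bool, σ.length < d → ρ.length = d → σ <+: ρ →
      (r (b σ) (a ρ) ↔ (σ ++ [true]) <+: ρ)

/-- if both `A₁ = N(b₀) ∩ A` and `A₀ = A ∖ N(b₀)` contain the leaves of a
`d`-tree with nodes in `U`, then `A` contains the leaves of a `(d+1)`-tree. -/
theorem stmt_13 {α β : Type*} (r : α → β → Prop) (b₀ : α) (A : Set β) (d : ℕ)
    (h₁ : ∃ f g, IsTree r {w | w ∈ A ∧ r b₀ w} d f g)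
    (h₀ : ∃ f g, IsTree r {w | w ∈ A ∧ ¬r b₀ w} d f g) :
    ∃ f g, IsTree r A (d + 1) f g := by
  obtain ⟨f₁, g₁, hl₁, he₁⟩ := h₁
  obtain ⟨f₀, g₀, hl₀, he₀⟩ := h₀
  refine ⟨fun σ => match σ with
      | [] => b₀
      | (c :: σ') => if c then f₁ σ' else f₀ σ',
    fun ρ => match ρ with
      | [] => g₁ []
      | (c :: ρ') => if c then g₁ ρ' else g₀ ρ', ?_, ?_⟩
  · intro ρ hρ
    match ρ with
    | [] => simp at hρ
    | (c :: ρ') =>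
      simp only [List.length_cons, Nat.add_right_cancel_iff] at hρ
      cases c
      · exact (hl₀ ρ' hρ).1
      · exact (hl₁ ρ' hρ).1
  · intro σ ρ hσ hρ hpre
    match ρ with
    | [] => simp at hρ
    | (c :: ρ') =>
      simp only [List.length_cons, Nat.add_right_cancel_iff] at hρ
      match σ with
      | [] =>
        cases c <;> simp only [if_true, if_false, Bool.false_eq_true]
        · constructor
          · intro h; exact absurd h (hl₀ ρ' hρ).2
          · intro h
            obtain ⟨t, ht⟩ := h
            simp at ht
        · constructor
          · intro _; exact ⟨ρ', rfl⟩
          · intro _; exact (hl₁ ρ' hρ).2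
      | (c' :: σ') =>
        obtain ⟨t, ht⟩ := hpre
        injection ht with h1 h2
        subst h1
        have hpre' : σ' <+: ρ' := ⟨t, h2⟩
        simp only [List.length_cons, Nat.add_lt_add_iff_right] at hσ
        cases c' <;> simp only [if_true, if_false, Bool.false_eq_true]
        · rw [he₀ σ' ρ' hσ hρ hpre']
          simp [List.prefix_cons_iff]
        · rw [he₁ σ' ρ' hσ hρ hpre']
          simp [List.prefix_cons_iff]
end

section
/- Let V be a set, R ⊆ V × V × V a ternary relation, and ℓ ≥ 2. Suppose R has ℓ-FOP₂, i.e., there exist a₁,…,a_ℓ, c₁,…,c_ℓ ∈ V and, for each function f : [ℓ]² → [ℓ], elements b₁^f,…,b_ℓ^f ∈ V, such that for all i,j,k ∈ [ℓ]: (a_i, b_j^f, c_k) ∈ R if and only if k ≤ f(i,j). Then the complement relation ¬R has (ℓ−1)-FOP₂: there exist a'₁,…,a'_{ℓ−1}, c'₁,…,c'_{ℓ−1} ∈ V and, for each g : [ℓ−1]² → [ℓ−1], elements b'₁^g,…,b'_{ℓ−1}^g ∈ V, such that for all i,j,k ∈ [ℓ−1]: (a'_i, b'^g_j, c'_k) ∉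 R if and only if k ≤ g(i,j). -/
/-- if a ternary relation `R` has `ℓ-FOP₂` (`ℓ ≥ 2`), then its complement
has `(ℓ−1)-FOP₂`.  Here `[ℓ]` is modelled as `Fin ℓ` with its order. -/
theorem stmt_14 {V : Type*} (R : V → V → V → Prop) (ℓ : ℕ) (hℓ : 2 ≤ ℓ)
    (a c : Fin ℓ → V) (b : (Fin ℓ → Fin ℓ → Fin ℓ) → Fin ℓ → V)
    (h : ∀ (f : Fin ℓ → Fin ℓ → Fin ℓ) (i j k : Fin ℓ),
      R (a i) (b f j) (c k) ↔ k ≤ f i j) :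
    ∃ (a' c' : Fin (ℓ - 1) → V)
      (b' : (Fin (ℓ - 1) → Fin (ℓ - 1) → Fin (ℓ - 1)) → Fin (ℓ - 1) → V),
      ∀ (g : Fin (ℓ - 1) → Fin (ℓ - 1) → Fin (ℓ - 1)) (i j k : Fin (ℓ - 1)),
        ¬R (a' i) (b' g j) (c' k) ↔ k ≤ g i j := by
  -- For a function `g` on `Fin (ℓ-1)`, build `f` on `Fin ℓ` with `f i j = ℓ - 2 - g i j`.
  set F : (Fin (ℓ - 1) → Fin (ℓ - 1) → Fin (ℓ - 1)) → Fin ℓ → Fin ℓ → Fin ℓ :=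
    fun g i j => ⟨ℓ - 2 - (g ⟨min i.1 (ℓ - 2), by omega⟩ ⟨min j.1 (ℓ - 2), by omega⟩).1,
      by omega⟩ with hF
  refine ⟨fun i => a ⟨i.1, by omega⟩, fun k => c ⟨ℓ - 1 - k.1, by omega⟩,
    fun g j => b (F g) ⟨j.1, by omega⟩, ?_⟩
  intro g i j k
  rw [h]
  have hi : i.1 ≤ ℓ - 2 := by omega
  have hj : j.1 ≤ ℓ - 2 := by omega
  have hk : k.1 < ℓ - 1 := k.2
  simp only [hF, Fin.le_def, Fin.mk_le_mk, Nat.min_eq_left hi, Nat.min_eq_left hj, Fin.eta]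
  have hg : (g i j).1 < ℓ - 1 := (g i j).2
  omega
end

section
/- Let 𝒲₂ be the infinite 3-uniform hypergraph with vertex set {a_i, b_i, c_i : i ∈ ℕ} (all vertices distinct) and edge set { {a_i, b_j, c_j} : i ≤ j }. Then every finite induced sub-3-graph of 𝒲₂ on n vertices has at most n²/4 edges. -/
/-- every finite induced sub-3-graph of `𝒲₂` on `n` vertices has at most
`n²/4` edges.  The vertex set `{a_i, b_i, c_i : i ∈ ℕ}` is modelled as `ℕ ⊕ ℕ ⊕ ℕ`
(`a_i = .inl i`, `b_i = .inr (.inl i)`, `c_i = .inr (.inr i)`); the edge `{a_i, b_j, c_j}`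
(for `i ≤ j`) is recorded by the pair `(i, j)`, so the edges of the sub-3-graph induced
on `V'` correspond exactly to the pairs counted below. -/
theorem stmt_16 (V' : Finset (ℕ ⊕ ℕ ⊕ ℕ)) :
    (({e : ℕ × ℕ | e.1 ≤ e.2 ∧ Sum.inl e.1 ∈ V' ∧
          Sum.inr (Sum.inl e.2) ∈ V' ∧ Sum.inr (Sum.inr e.2) ∈ V'}.ncard : ℝ)) ≤
      (V'.card : ℝ) ^ 2 / 4 := by
  classical
  set A : Finset ℕ := V'.preimage Sum.inl Sum.inl_injective.injOn with hA
  set B : Finset ℕ := V'.preimage (fun j => Sum.inr (Sum.inl j))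
    (fun x _ y _ h => by simpa using h) with hB
  set C : Finset ℕ := V'.preimage (fun j => Sum.inr (Sum.inr j))
    (fun x _ y _ h => by simpa using h) with hC
  have hsub : {e : ℕ × ℕ | e.1 ≤ e.2 ∧ Sum.inl e.1 ∈ V' ∧
      Sum.inr (Sum.inl e.2) ∈ V' ∧ Sum.inr (Sum.inr e.2) ∈ V'} ⊆ ↑(A ×ˢ (B ∩ C)) := by
    intro e he
    simp only [Set.mem_setOf_eq] at he
    simp [hA, hB, hC, Finset.mem_preimage, he.2.1, he.2.2.1, he.2.2.2]
    exact ⟨Finset.mem_preimage.2 he.2.2.1, Finset.mem_preimage.2 he.2.2.2⟩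
  have h1 : ({e : ℕ × ℕ | e.1 ≤ e.2 ∧ Sum.inl e.1 ∈ V' ∧
      Sum.inr (Sum.inl e.2) ∈ V' ∧ Sum.inr (Sum.inr e.2) ∈ V'}.ncard)
      ≤ A.card * (B ∩ C).card := by
    have := Set.ncard_le_ncard hsub (Finset.finite_toSet _)
    rwa [Set.ncard_coe_finset, Finset.card_product] at this
  -- cardinality bound: |A| + 2|B∩C| ≤ |V'|
  set D := B ∩ C with hD
  have himg : (A.image Sum.inl) ∪ (D.image (fun j => Sum.inr (Sum.inl j)))
      ∪ (D.image (fun j => Sum.inr (Sum.inr j))) ⊆ V' := by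
    intro x hx
    simp only [Finset.mem_union, Finset.mem_image] at hx
    rcases hx with (⟨i, hi, rfl⟩ | ⟨i, hi, rfl⟩) | ⟨i, hi, rfl⟩
    · simpa [hA] using hi
    · have := Finset.mem_of_mem_inter_left hi; exact (Finset.mem_preimage (f := fun j => Sum.inr (Sum.inl j))).1 this
    · have := Finset.mem_of_mem_inter_right hi; exact (Finset.mem_preimage (f := fun j => Sum.inr (Sum.inr j))).1 this
  have hcard : A.card + D.card + D.card ≤ V'.card := by
    have h2 := Finset.card_le_card himg
    have e1 : ((A.image Sum.inl) ∪ (D.image (fun j => Sum.inr (Sum.inl j)))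
        ∪ (D.image (fun j => Sum.inr (Sum.inr j)))).card
        = A.card + D.card + D.card := by
      rw [Finset.card_union_of_disjoint, Finset.card_union_of_disjoint,
        Finset.card_image_of_injective _ Sum.inl_injective,
        Finset.card_image_of_injective _ (fun x y h => by simpa using h),
        Finset.card_image_of_injective _ (fun x y h => by simpa using h)]
      · simp only [Finset.disjoint_left, Finset.mem_image]
        rintro x ⟨i, hi, rfl⟩ ⟨i', hi', h⟩; simp at h
      · simp only [Finset.disjoint_left, Finset.mem_union, Finset.mem_image]
        rintro x (⟨i, hi, rfl⟩ | ⟨i, hi, rfl⟩) ⟨i', hi', h⟩ <;> simp at h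
    omega
  have hn : (A.card : ℝ) + D.card + D.card ≤ V'.card := by exact_mod_cast hcard
  have h1' : (({e : ℕ × ℕ | e.1 ≤ e.2 ∧ Sum.inl e.1 ∈ V' ∧
      Sum.inr (Sum.inl e.2) ∈ V' ∧ Sum.inr (Sum.inr e.2) ∈ V'}.ncard : ℝ))
      ≤ (A.card : ℝ) * D.card := by exact_mod_cast h1
  have ha : (0:ℝ) ≤ A.card := Nat.cast_nonneg _
  have hd : (0:ℝ) ≤ D.card := Nat.cast_nonneg _
  have hsq : ((A.card : ℝ) + D.card + D.card) ^ 2 ≤ (V'.card : ℝ) ^ 2 := by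
    apply pow_le_pow_left₀ (by linarith) hn
  nlinarith [h1', hsq, sq_nonneg ((A.card : ℝ) - 2 * D.card), mul_nonneg ha hd]
end

section
/- (Bipartite induced counting lemma, explicit form) Let U, W be finite sets and R ⊆ U × W. Let (V_x)_{x ∈ U ∪ W} be pairwise disjoint nonempty finite vertex sets and let G = (V, E) be a graph on V = ∪_x V_x. Let η ≥ 0 and suppose that for every (u,w) ∈ R, |E ∩ K₂[V_u, V_w]| ≥ (1 − η)|V_u||V_w|, and for every (u,w) ∈ (U × W) ∖ R, |E ∩ K₂[V_u, V_w]| ≤ η|V_u||V_w|. Then the number of tuples (v_x)_{x ∈ U ∪ W} ∈ ∏_x V_x such that for all (u,w) ∈ U × W: {v_u, v_w} ∈ E if and only if (u,w) ∈ R, is at least (1 − |U||W|·η) · ∏_{x ∈ U ∪ W} |V_x|. -/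
set_option maxHeartbeats 1000000

open Finset

private lemma coord_sum {ι V : Type*} [Fintype ι] [DecidableEq ι]
    (A : ι → Finset V) (u : ι) (F : V → ℕ) :
    ∑ f ∈ Fintype.piFinset A, F (f u) =
      (∑ x ∈ A u, F x) * ∏ i ∈ Finset.univ.erase u, (A i).card := by
  have h := Finset.prod_univ_sum A (fun i x => if i = u then F x else 1)
  have hL : ∑ f ∈ Fintype.piFinset A, F (f u)
      = ∑ f ∈ Fintype.piFinset A, ∏ i, (if i = u then F (f i) else 1) := by
    refine Finset.sum_congr rfl fun f _ => ?_
    rw [Finset.prod_ite_eq' Finset.univ u (fun i => F (f i))]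
    simp
  rw [hL, ← h, ← Finset.mul_prod_erase Finset.univ _ (Finset.mem_univ u)]
  congr 1
  · simp
  · refine Finset.prod_congr rfl fun i hi => ?_
    have : i ≠ u := (Finset.mem_erase.1 hi).1
    simp [this]

private lemma pair_count {ι κ V : Type*} [Fintype ι] [Fintype κ] [DecidableEq ι]
    [DecidableEq κ] (A : ι → Finset V) (B : κ → Finset V) (u : ι) (w : κ)
    (p : V → V → Prop) [DecidableRel p] :
    ((Fintype.piFinset A ×ˢ Fintype.piFinset B).filter fun fg => p (fg.1 u) (fg.2 w)).card =
      ((A u ×ˢ B w).filter fun ab => p ab.1 ab.2).card *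
        ((∏ i ∈ Finset.univ.erase u, (A i).card) * ∏ j ∈ Finset.univ.erase w, (B j).card) := by
  rw [Finset.card_filter, Finset.sum_product]
  have hg : ∀ f : ι → V, (∑ g ∈ Fintype.piFinset B, if p (f u) (g w) then 1 else 0)
      = (∑ y ∈ B w, if p (f u) y then 1 else 0) * ∏ j ∈ Finset.univ.erase w, (B j).card :=
    fun f => coord_sum B w (fun y => if p (f u) y then 1 else 0)
  simp only [hg]
  rw [← Finset.sum_mul, coord_sum A u (fun x => ∑ y ∈ B w, if p x y then 1 else 0)]
  rw [Finset.card_filter, Finset.sum_product, mul_assoc]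

/-- bipartite induced counting lemma, explicit form.  The finite index
sets `U`, `W` are modelled as the finite types `ι`, `κ`, the relation `R ⊆ U × W` as
`R : ι → κ → Prop`, and the vertex sets `(V_x)` as the families `A : ι → Finset V`,
`B : κ → Finset V` of pairwise disjoint nonempty finite sets.  Tuples in `∏_x V_x` are
pairs of choice functions, counted via `Fintype.piFinset`. -/
theorem stmt_17 {ι κ V : Type*} [Fintype ι] [Fintype κ] [DecidableEq ι] [DecidableEq κ]
    [DecidableEq V] (G : SimpleGraph V) [DecidableRel G.Adj]
    (A : ι → Finset V) (B : κ → Finset V) (R : ι → κ → Prop) [∀ u, DecidablePred (R u)]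
    (hAne : ∀ u, (A u).Nonempty) (hBne : ∀ w, (B w).Nonempty)
    (hAA : ∀ u u', u ≠ u' → Disjoint (A u) (A u'))
    (hBB : ∀ w w', w ≠ w' → Disjoint (B w) (B w'))
    (hAB : ∀ u w, Disjoint (A u) (B w))
    (η : ℝ) (hη : 0 ≤ η)
    (hdense : ∀ u w, R u w →
      (1 - η) * (A u).card * (B w).card ≤ ((G.interedges (A u) (B w)).card : ℝ))
    (hsparse : ∀ u w, ¬R u w →
      ((G.interedges (A u) (B w)).card : ℝ) ≤ η * (A u).card * (B w).card) :
    (1 - (Fintype.card ι : ℝ) * (Fintype.card κ : ℝ) * η) *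
        ((∏ u, ((A u).card : ℝ)) * ∏ w, ((B w).card : ℝ)) ≤
      (((Fintype.piFinset A ×ˢ Fintype.piFinset B).filter fun fg =>
          ∀ u w, G.Adj (fg.1 u) (fg.2 w) ↔ R u w).card : ℝ) := by
  classical
  set T := Fintype.piFinset A ×ˢ Fintype.piFinset B with hTdef
  set tot : ℝ := (∏ u, ((A u).card : ℝ)) * ∏ w, ((B w).card : ℝ) with htot
  have htot0 : 0 ≤ tot := by
    apply mul_nonneg <;> exact Finset.prod_nonneg fun _ _ => by positivity
  have hTcard : (T.card : ℝ) = tot := by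
    rw [hTdef, Finset.card_product, Fintype.card_piFinset, Fintype.card_piFinset]
    push_cast; rfl
  -- per-pair bad set bound
  have hpair : ∀ u w,
      ((T.filter fun fg => ¬ (G.Adj (fg.1 u) (fg.2 w) ↔ R u w)).card : ℝ) ≤ η * tot := by
    intro u w
    rw [hTdef, pair_count A B u w (fun a b => ¬ (G.Adj a b ↔ R u w))]
    have hbadpairs : ((((A u) ×ˢ (B w)).filter fun ab => ¬ (G.Adj ab.1 ab.2 ↔ R u w)).card : ℝ)
        ≤ η * (A u).card * (B w).card := by
      have hinter : G.interedges (A u) (B w)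
          = ((A u) ×ˢ (B w)).filter fun ab => G.Adj ab.1 ab.2 := rfl
      by_cases hR : R u w
      · have heq : (((A u) ×ˢ (B w)).filter fun ab => ¬ (G.Adj ab.1 ab.2 ↔ R u w))
            = ((A u) ×ˢ (B w)).filter fun ab => ¬ G.Adj ab.1 ab.2 := by
          apply Finset.filter_congr; intro x _; simp [hR]
        have hsum := Finset.card_filter_add_card_filter_not
          (s := (A u) ×ˢ (B w)) (p := fun ab => G.Adj ab.1 ab.2)
        have hd := hdense u w hR
        rw [hinter] at hd
        rw [heq]
        have : ((((A u) ×ˢ (B w)).filter fun ab => ¬ G.Adj ab.1 ab.2).card : ℝ)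
            = ((A u).card : ℝ) * (B w).card
              - ((((A u) ×ˢ (B w)).filter fun ab => G.Adj ab.1 ab.2).card : ℝ) := by
          have := congrArg (Nat.cast (R := ℝ)) hsum
          push_cast [Finset.card_product] at this
          linarith
        rw [this]
        nlinarith
      · have heq : (((A u) ×ˢ (B w)).filter fun ab => ¬ (G.Adj ab.1 ab.2 ↔ R u w))
            = ((A u) ×ˢ (B w)).filter fun ab => G.Adj ab.1 ab.2 := by
          apply Finset.filter_congr; intro x _; simp [hR]
        have hs := hsparse u w hR
        rw [hinter] at hs
        rw [heq]; linarith
    have hprodA : ((A u).card : ℝ) * ∏ i ∈ Finset.univ.erase u, ((A i).card : ℝ)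
        = ∏ i, ((A i).card : ℝ) :=
      Finset.mul_prod_erase Finset.univ (fun i => ((A i).card : ℝ)) (Finset.mem_univ u)
    have hprodB : ((B w).card : ℝ) * ∏ j ∈ Finset.univ.erase w, ((B j).card : ℝ)
        = ∏ j, ((B j).card : ℝ) :=
      Finset.mul_prod_erase Finset.univ (fun j => ((B j).card : ℝ)) (Finset.mem_univ w)
    have hA0 : (0:ℝ) ≤ ∏ i ∈ Finset.univ.erase u, ((A i).card : ℝ) :=
      Finset.prod_nonneg fun _ _ => by positivity
    have hB0 : (0:ℝ) ≤ ∏ j ∈ Finset.univ.erase w, ((B j).card : ℝ) :=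
      Finset.prod_nonneg fun _ _ => by positivity
    push_cast
    calc ((((A u) ×ˢ (B w)).filter fun ab => ¬ (G.Adj ab.1 ab.2 ↔ R u w)).card : ℝ)
          * ((∏ i ∈ Finset.univ.erase u, ((A i).card : ℝ))
            * ∏ j ∈ Finset.univ.erase w, ((B j).card : ℝ))
        ≤ (η * (A u).card * (B w).card)
          * ((∏ i ∈ Finset.univ.erase u, ((A i).card : ℝ))
            * ∏ j ∈ Finset.univ.erase w, ((B j).card : ℝ)) := by
          apply mul_le_mul_of_nonneg_right hbadpairs (mul_nonneg hA0 hB0)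
      _ = η * tot := by rw [htot, ← hprodA, ← hprodB]; ring
  -- union bound
  set P : (ι → V) × (κ → V) → Prop := fun fg => ∀ u w, G.Adj (fg.1 u) (fg.2 w) ↔ R u w with hP
  have hsub : T.filter (fun x => ¬ P x) ⊆ (Finset.univ : Finset (ι × κ)).biUnion
      (fun uw => T.filter fun fg => ¬ (G.Adj (fg.1 uw.1) (fg.2 uw.2) ↔ R uw.1 uw.2)) := by
    intro x hx
    rw [Finset.mem_filter] at hx
    obtain ⟨hxT, hnP⟩ := hx
    have hex : ∃ u w, ¬ (G.Adj (x.1 u) (x.2 w) ↔ R u w) := by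
      by_contra hc
      push_neg at hc
      exact hnP hc
    obtain ⟨u, w, h⟩ := hex
    exact Finset.mem_biUnion.2 ⟨(u, w), Finset.mem_univ _,
      Finset.mem_filter.2 ⟨hxT, by simpa using h⟩⟩
  have hbad : ((T.filter (fun x => ¬ P x)).card : ℝ)
      ≤ (Fintype.card ι : ℝ) * (Fintype.card κ : ℝ) * η * tot := by
    calc ((T.filter (fun x => ¬ P x)).card : ℝ)
        ≤ (((Finset.univ : Finset (ι × κ)).biUnion
            (fun uw => T.filter fun fg =>
              ¬ (G.Adj (fg.1 uw.1) (fg.2 uw.2) ↔ R uw.1 uw.2))).card : ℝ) := by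
          exact_mod_cast Finset.card_le_card hsub
      _ ≤ ∑ uw : ι × κ, ((T.filter fun fg =>
            ¬ (G.Adj (fg.1 uw.1) (fg.2 uw.2) ↔ R uw.1 uw.2)).card : ℝ) := by
          exact_mod_cast Finset.card_biUnion_le
      _ ≤ ∑ _uw : ι × κ, η * tot := Finset.sum_le_sum fun uw _ => hpair uw.1 uw.2
      _ = (Fintype.card ι : ℝ) * (Fintype.card κ : ℝ) * η * tot := by
          rw [Finset.sum_const, Finset.card_univ, Fintype.card_prod]
          push_cast; ring
  have hsplit : (T.filter P).card + (T.filter (fun x => ¬ P x)).card = T.card :=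
    Finset.card_filter_add_card_filter_not (p := P)
  have hsplit' : ((T.filter P).card : ℝ) = tot - ((T.filter (fun x => ¬ P x)).card : ℝ) := by
    have := congrArg (Nat.cast (R := ℝ)) hsplit
    push_cast at this
    rw [hTcard] at this
    linarith
  have hgoal : (1 - (Fintype.card ι : ℝ) * (Fintype.card κ : ℝ) * η) * tot
      ≤ ((T.filter P).card : ℝ) := by
    rw [hsplit']; nlinarith
  exact hgoal
end

section
/- Let k ≥ 1 and let U, W, Z₁, …, Z_k be pairwise disjoint nonempty finite sets, Z = Z₁ ∪ ⋯ ∪ Z_k, and let K₂[U,W] = P¹ ⊔ ⋯ ⊔ P^k be any partition. Let H = (V, E) be the 3-partite 3-graph with V = U ∪ W ∪ Z and E = { {u, w, z} : u ∈ U, w ∈ W, z ∈ Z_i, {u,w} ∈ P^α for some α ≤ i }. Then VC₂(H) ≤ 1; concretely, there do not exist vertices x₁, x₂, y₁, y₂ ∈ V and vertices z_S ∈ V for each S ⊆ {1,2} × {1,2} such that for all i, j ∈ {1,2} and all S: {x_i, y_j, z_S} ∈ E if and only if (i,j) ∈ S. -/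
private def S00 : Finset (Fin 2 × Fin 2) := {(0, 0)}
private def S01 : Finset (Fin 2 × Fin 2) := {(0, 1)}

set_option maxHeartbeats 1600000 in
private lemma split18 {V : Type*} [DecidableEq V] {k : ℕ}
    {U W : Finset V} {Z : Fin k → Finset V}
    (hUW : Disjoint U W) (hUZ : ∀ i, Disjoint U (Z i)) (hWZ : ∀ i, Disjoint W (Z i))
    {P : Fin k → Finset (V × V)} (hPsub : ∀ α, P α ⊆ U ×ˢ W)
    {E : Set (Finset V)}
    (hE : E = {e | ∃ i α : Fin k, α ≤ i ∧
      ∃ u w z, (u, w) ∈ P α ∧ z ∈ Z i ∧ e = {u, w, z}})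
    (a b c : V) (he : ({a, b, c} : Finset V) ∈ E) :
    ∃ α i : Fin k, α ≤ i ∧
      (((a, b) ∈ P α ∧ c ∈ Z i) ∨ ((a, c) ∈ P α ∧ b ∈ Z i) ∨
       ((b, a) ∈ P α ∧ c ∈ Z i) ∨ ((c, a) ∈ P α ∧ b ∈ Z i) ∨
       ((b, c) ∈ P α ∧ a ∈ Z i) ∨ ((c, b) ∈ P α ∧ a ∈ Z i)) := by
  rw [hE] at he
  obtain ⟨i, α, hαi, u, w, zz, hp, hz, heq⟩ := he
  have hu : u ∈ U := (Finset.mem_product.mp (hPsub α hp)).1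
  have hw : w ∈ W := (Finset.mem_product.mp (hPsub α hp)).2
  have huw : u ≠ w := fun e => Finset.disjoint_left.mp hUW hu (e ▸ hw)
  have huz : u ≠ zz := fun e => Finset.disjoint_left.mp (hUZ i) hu (e ▸ hz)
  have hwz : w ≠ zz := fun e => Finset.disjoint_left.mp (hWZ i) hw (e ▸ hz)
  have huw' := huw.symm
  have huz' := huz.symm
  have hwz' := hwz.symm
  have ha : a = u ∨ a = w ∨ a = zz := by
    have : a ∈ ({u, w, zz} : Finset V) := by rw [← heq]; simp
    simpa using this
  have hb : b = u ∨ b = w ∨ b = zz := by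
    have : b ∈ ({u, w, zz} : Finset V) := by rw [← heq]; simp
    simpa using this
  have hc : c = u ∨ c = w ∨ c = zz := by
    have : c ∈ ({u, w, zz} : Finset V) := by rw [← heq]; simp
    simpa using this
  have hu' : u = a ∨ u = b ∨ u = c := by
    have : u ∈ ({a, b, c} : Finset V) := by rw [heq]; simp
    simpa using this
  have hw' : w = a ∨ w = b ∨ w = c := by
    have : w ∈ ({a, b, c} : Finset V) := by rw [heq]; simp
    simpa using this
  have hz' : zz = a ∨ zz = b ∨ zz = c := by
    have : zz ∈ ({a, b, c} : Finset V) := by rw [heq]; simp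
    simpa using this
  refine ⟨α, i, hαi, ?_⟩
  rcases ha with rfl | rfl | rfl <;> rcases hb with rfl | rfl | rfl <;>
    rcases hc with rfl | rfl | rfl <;>
    first
      | tauto
      | (simp_all; try tauto)

private lemma aux18 {V : Type*} [DecidableEq V] {k : ℕ}
    {U W : Finset V} {Z : Fin k → Finset V}
    (hUW : Disjoint U W) (hUZ : ∀ i, Disjoint U (Z i)) (hWZ : ∀ i, Disjoint W (Z i))
    (hZZ : ∀ i j, i ≠ j → Disjoint (Z i) (Z j))
    {P : Fin k → Finset (V × V)} (hPsub : ∀ α, P α ⊆ U ×ˢ W)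
    {E : Set (Finset V)}
    (hE : E = {e | ∃ i α : Fin k, α ≤ i ∧
      ∃ u w z, (u, w) ∈ P α ∧ z ∈ Z i ∧ e = {u, w, z}})
    (x y : Fin 2 → V) (z : Finset (Fin 2 × Fin 2) → V)
    (h : ∀ i j S, ({x i, y j, z S} : Finset V) ∈ E ↔ (i, j) ∈ S)
    (hcase : (∃ α i : Fin k, α ≤ i ∧ (x 0, y 0) ∈ P α ∧ z Finset.univ ∈ Z i)
      ∨ (∃ α i : Fin k, α ≤ i ∧ (x 0, z Finset.univ) ∈ P α ∧ y 0 ∈ Z i)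
      ∨ (∃ α i : Fin k, α ≤ i ∧ (z Finset.univ, x 0) ∈ P α ∧ y 0 ∈ Z i)) :
    False := by
  have pU : ∀ {a b : V} {α : Fin k}, (a, b) ∈ P α → a ∈ U :=
    fun hp => (Finset.mem_product.mp (hPsub _ hp)).1
  have pW : ∀ {a b : V} {α : Fin k}, (a, b) ∈ P α → b ∈ W :=
    fun hp => (Finset.mem_product.mp (hPsub _ hp)).2
  have dUW : ∀ {a : V}, a ∈ U → a ∈ W → False :=
    fun h1 h2 => Finset.disjoint_left.mp hUW h1 h2
  have dUZ : ∀ {a : V} {i}, a ∈ U → a ∈ Z i → False :=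
    fun h1 h2 => Finset.disjoint_left.mp (hUZ _) h1 h2
  have dWZ : ∀ {a : V} {i}, a ∈ W → a ∈ Z i → False :=
    fun h1 h2 => Finset.disjoint_left.mp (hWZ _) h1 h2
  have dZZ : ∀ {a : V} {i j}, a ∈ Z i → a ∈ Z j → i = j := by
    intro a i j h1 h2
    by_contra hne
    exact Finset.disjoint_left.mp (hZZ _ _ hne) h1 h2
  have mkE : ∀ (e : Finset V) (u w zz : V) (α i : Fin k),
      α ≤ i → (u, w) ∈ P α → zz ∈ Z i → e = {u, w, zz} → e ∈ E := by
    intro e u w zz α i hαi hp hz he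
    rw [hE]
    exact ⟨i, α, hαi, u, w, zz, hp, hz, he⟩
  have swap23 : ∀ p q r : V, ({p, q, r} : Finset V) = {p, r, q} := by
    intro p q r; ext t; simp; tauto
  have rot : ∀ p q r : V, ({p, q, r} : Finset V) = {r, p, q} := by
    intro p q r; ext t; simp; tauto
  have split := split18 hUW hUZ hWZ hPsub hE
  have m00 : ((0 : Fin 2), (0 : Fin 2)) ∈ S00 := by decide
  have n01 : ((0 : Fin 2), (1 : Fin 2)) ∉ S00 := by decide
  have m01 : ((0 : Fin 2), (1 : Fin 2)) ∈ S01 := by decide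
  have n00 : ((0 : Fin 2), (0 : Fin 2)) ∉ S01 := by decide
  have e01 : ({x 0, y 1, z Finset.univ} : Finset V) ∈ E :=
    (h 0 1 Finset.univ).mpr (Finset.mem_univ _)
  have eA : ({x 0, y 0, z S00} : Finset V) ∈ E := (h 0 0 S00).mpr m00
  have eB : ({x 0, y 1, z S01} : Finset V) ∈ E := (h 0 1 S01).mpr m01
  have nA : ({x 0, y 1, z S00} : Finset V) ∉ E := fun he => n01 ((h 0 1 S00).mp he)
  have nB : ({x 0, y 0, z S01} : Finset V) ∉ E := fun he => n00 ((h 0 0 S01).mp he)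
  rcases hcase with ⟨α0, i0, hle0, hp0, hz0⟩ | ⟨α0, i0, hle0, hp0, hz0⟩ |
    ⟨α0, i0, hle0, hp0, hz0⟩
  · -- x's in U, y's in W, z's in Z
    have hx0 : x 0 ∈ U := pU hp0
    have hy0 : y 0 ∈ W := pW hp0
    obtain ⟨α1, l1, hle1, D⟩ := split _ _ _ e01
    have hy1 : y 1 ∈ W := by
      rcases D with D | D | D | D | D | D
      · exact pW D.1
      · exact (dWZ (pW D.1) hz0).elim
      · exact (dUW hx0 (pW D.1)).elim
      · exact (dUZ (pU D.1) hz0).elim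
      · exact (dUZ hx0 D.2).elim
      · exact (dUZ hx0 D.2).elim
    obtain ⟨a1, m1, hlem1, DA⟩ := split _ _ _ eA
    have HA : (x 0, y 0) ∈ P a1 ∧ z S00 ∈ Z m1 := by
      rcases DA with D | D | D | D | D | D
      · exact D
      · exact (dWZ hy0 D.2).elim
      · exact (dUW (pU D.1) hy0).elim
      · exact (dWZ hy0 D.2).elim
      · exact (dUW (pU D.1) hy0).elim
      · exact (dUZ hx0 D.2).elim
    obtain ⟨a2, m2, hlem2, DB⟩ := split _ _ _ eB
    have HB : (x 0, y 1) ∈ P a2 ∧ z S01 ∈ Z m2 := by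
      rcases DB with D | D | D | D | D | D
      · exact D
      · exact (dWZ hy1 D.2).elim
      · exact (dUW (pU D.1) hy1).elim
      · exact (dWZ hy1 D.2).elim
      · exact (dUW (pU D.1) hy1).elim
      · exact (dUZ hx0 D.2).elim
    have h1 : m1 < a2 := by
      by_contra hc
      push_neg at hc
      exact nA (mkE _ (x 0) (y 1) (z S00) a2 m1 hc HB.1 HA.2 rfl)
    have h2 : m2 < a1 := by
      by_contra hc
      push_neg at hc
      exact nB (mkE _ (x 0) (y 0) (z S01) a1 m2 hc HA.1 HB.2 rfl)
    exact lt_irrefl a1 (((hlem1.trans_lt h1).trans_le hlem2).trans h2)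
  · -- x's in U, z's in W, y's in Z
    have hx0 : x 0 ∈ U := pU hp0
    have hzu : z Finset.univ ∈ W := pW hp0
    obtain ⟨α1, l1, hle1, D⟩ := split _ _ _ e01
    have hy1 : y 1 ∈ Z l1 := by
      rcases D with D | D | D | D | D | D
      · exact (dWZ hzu D.2).elim
      · exact D.2
      · exact (dUW hx0 (pW D.1)).elim
      · exact (dUW (pU D.1) hzu).elim
      · exact (dUZ hx0 D.2).elim
      · exact (dUZ hx0 D.2).elim
    obtain ⟨a1, m1, hlem1, DA⟩ := split _ _ _ eA
    have HA : (x 0, z S00) ∈ P a1 ∧ y 0 ∈ Z m1 := by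
      rcases DA with D | D | D | D | D | D
      · exact (dWZ (pW D.1) hz0).elim
      · exact D
      · exact (dUZ (pU D.1) hz0).elim
      · exact (dUW hx0 (pW D.1)).elim
      · exact (dUZ (pU D.1) hz0).elim
      · exact (dWZ (pW D.1) hz0).elim
    obtain ⟨a2, m2, hlem2, DB⟩ := split _ _ _ eB
    have HB : (x 0, z S01) ∈ P a2 ∧ y 1 ∈ Z m2 := by
      rcases DB with D | D | D | D | D | D
      · exact (dWZ (pW D.1) hy1).elim
      · exact D
      · exact (dUZ (pU D.1) hy1).elim
      · exact (dUW hx0 (pW D.1)).elim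
      · exact (dUZ (pU D.1) hy1).elim
      · exact (dWZ (pW D.1) hy1).elim
    have em1 : m1 = i0 := dZZ HA.2 hz0
    have em2 : m2 = l1 := dZZ HB.2 hy1
    rw [em1] at hlem1
    rw [em2] at hlem2
    have h1 : l1 < a1 := by
      by_contra hc
      push_neg at hc
      exact nA (mkE _ (x 0) (z S00) (y 1) a1 l1 hc HA.1 hy1 (swap23 _ _ _))
    have h2 : i0 < a2 := by
      by_contra hc
      push_neg at hc
      exact nB (mkE _ (x 0) (z S01) (y 0) a2 i0 hc HB.1 hz0 (swap23 _ _ _))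
    exact lt_irrefl a1 (((hlem1.trans_lt h2).trans_le hlem2).trans h1)
  · -- z's in U, x's in W, y's in Z
    have hzu : z Finset.univ ∈ U := pU hp0
    have hx0 : x 0 ∈ W := pW hp0
    obtain ⟨α1, l1, hle1, D⟩ := split _ _ _ e01
    have hy1 : y 1 ∈ Z l1 := by
      rcases D with D | D | D | D | D | D
      · exact (dUW (pU D.1) hx0).elim
      · exact (dUW (pU D.1) hx0).elim
      · exact (dUZ hzu D.2).elim
      · exact D.2
      · exact (dUW hzu (pW D.1)).elim
      · exact (dWZ hx0 D.2).elim
    obtain ⟨a1, m1, hlem1, DA⟩ := split _ _ _ eA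
    have HA : (z S00, x 0) ∈ P a1 ∧ y 0 ∈ Z m1 := by
      rcases DA with D | D | D | D | D | D
      · exact (dUW (pU D.1) hx0).elim
      · exact (dUW (pU D.1) hx0).elim
      · exact (dUZ (pU D.1) hz0).elim
      · exact D
      · exact (dUZ (pU D.1) hz0).elim
      · exact (dWZ hx0 D.2).elim
    obtain ⟨a2, m2, hlem2, DB⟩ := split _ _ _ eB
    have HB : (z S01, x 0) ∈ P a2 ∧ y 1 ∈ Z m2 := by
      rcases DB with D | D | D | D | D | D
      · exact (dUW (pU D.1) hx0).elim
      · exact (dUW (pU D.1) hx0).elim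
      · exact (dUZ (pU D.1) hy1).elim
      · exact D
      · exact (dUZ (pU D.1) hy1).elim
      · exact (dWZ hx0 D.2).elim
    have em1 : m1 = i0 := dZZ HA.2 hz0
    have em2 : m2 = l1 := dZZ HB.2 hy1
    rw [em1] at hlem1
    rw [em2] at hlem2
    have h1 : l1 < a1 := by
      by_contra hc
      push_neg at hc
      exact nA (mkE _ (z S00) (x 0) (y 1) a1 l1 hc HA.1 hy1 (rot _ _ _))
    have h2 : i0 < a2 := by
      by_contra hc
      push_neg at hc
      exact nB (mkE _ (z S01) (x 0) (y 0) a2 i0 hc HB.1 hz0 (rot _ _ _))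
    exact lt_irrefl a1 (((hlem1.trans_lt h2).trans_le hlem2).trans h1)

/-- the "binary" 3-partite 3-graph built from any partition
`K₂[U,W] = P¹ ⊔ ⋯ ⊔ P^k` (edges `{u,w,z}` with `z ∈ Z_i`, `{u,w} ∈ P^α`, `α ≤ i`) has
`VC₂`-dimension at most `1`: no configuration `x₁,x₂,y₁,y₂,(z_S)_{S ⊆ {1,2}²}` with
`{x_i, y_j, z_S} ∈ E ↔ (i,j) ∈ S` exists.  Pairs of `K₂[U,W]` are modelled as ordered
pairs in `U ×ˢ W` (faithful since `U` and `W` are disjoint); edges are unordered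
3-element sets, modelled as `Finset`s. -/
theorem stmt_18 {V : Type*} [DecidableEq V] (k : ℕ) (hk : 1 ≤ k)
    (U W : Finset V) (Z : Fin k → Finset V)
    (hU : U.Nonempty) (hW : W.Nonempty) (hZ : ∀ i, (Z i).Nonempty)
    (hUW : Disjoint U W) (hUZ : ∀ i, Disjoint U (Z i)) (hWZ : ∀ i, Disjoint W (Z i))
    (hZZ : ∀ i j, i ≠ j → Disjoint (Z i) (Z j))
    (P : Fin k → Finset (V × V))
    (hPsub : ∀ α, P α ⊆ U ×ˢ W)
    (hPdisj : ∀ α β, α ≠ β → Disjoint (P α) (P β))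
    (hPcover : U ×ˢ W = Finset.univ.biUnion P)
    (E : Set (Finset V))
    (hE : E = {e | ∃ i α : Fin k, α ≤ i ∧
      ∃ u w z, (u, w) ∈ P α ∧ z ∈ Z i ∧ e = {u, w, z}}) :
    ¬∃ (x y : Fin 2 → V) (z : Finset (Fin 2 × Fin 2) → V),
        ∀ (i j : Fin 2) (S : Finset (Fin 2 × Fin 2)),
          ({x i, y j, z S} : Finset V) ∈ E ↔ (i, j) ∈ S := by
  rintro ⟨x, y, z, h⟩
  have e00 : ({x 0, y 0, z Finset.univ} : Finset V) ∈ E :=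
    (h 0 0 Finset.univ).mpr (Finset.mem_univ _)
  obtain ⟨α, i, hαi, D⟩ := split18 hUW hUZ hWZ hPsub hE _ _ _ e00
  have himg : (Finset.univ.image Prod.swap : Finset (Fin 2 × Fin 2)) = Finset.univ := by
    decide
  have h' : ∀ (i j : Fin 2) (S : Finset (Fin 2 × Fin 2)),
      ({y i, x j, z (S.image Prod.swap)} : Finset V) ∈ E ↔ (i, j) ∈ S := by
    intro i j S
    rw [Finset.insert_comm, h j i (S.image Prod.swap)]
    revert S i j
    decide
  rcases D with ⟨hp, hz⟩ | ⟨hp, hz⟩ | ⟨hp, hz⟩ | ⟨hp, hz⟩ | ⟨hp, hz⟩ | ⟨hp, hz⟩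
  · exact aux18 hUW hUZ hWZ hZZ hPsub hE x y z h (Or.inl ⟨α, i, hαi, hp, hz⟩)
  · exact aux18 hUW hUZ hWZ hZZ hPsub hE x y z h (Or.inr (Or.inl ⟨α, i, hαi, hp, hz⟩))
  · refine aux18 hUW hUZ hWZ hZZ hPsub hE y x (fun S => z (S.image Prod.swap)) h'
      (Or.inl ⟨α, i, hαi, hp, ?_⟩)
    show z (Finset.univ.image Prod.swap) ∈ Z i
    rw [himg]
    exact hz
  · exact aux18 hUW hUZ hWZ hZZ hPsub hE x y z h (Or.inr (Or.inr ⟨α, i, hαi, hp, hz⟩))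
  · refine aux18 hUW hUZ hWZ hZZ hPsub hE y x (fun S => z (S.image Prod.swap)) h'
      (Or.inr (Or.inl ⟨α, i, hαi, ?_, hz⟩))
    show (y 0, z (Finset.univ.image Prod.swap)) ∈ P α
    rw [himg]
    exact hp
  · refine aux18 hUW hUZ hWZ hZZ hPsub hE y x (fun S => z (S.image Prod.swap)) h'
      (Or.inr (Or.inr ⟨α, i, hαi, ?_, hz⟩))
    show (z (Finset.univ.image Prod.swap), y 0) ∈ P α
    rw [himg]
    exact hp
end
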